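/- Let R be a commutative ring, let n ≥ 1, and let K = T(n,R) be the R-algebra of upper triangular n×n matrices over R. Then every R-algebra automorphism of K is inner: for every R-algebra automorphism φ of K there exists an invertible element u of K such that φ(A) = u·A·u⁻¹ for all A ∈ K. -/

import Mathlib

/-- The `T`-subalgebra of upper triangular `n × n` matrices over `R`. -/
def triangularSubalgebra (T R : Type*) [CommRing T] [Ring R] [Algebra T R] (n : ℕ) :
    Subalgebra T (Matrix (Fin n) (Fin n) R) where
  carrier := {A | ∀ ⦃i j : Fin n⦄, j < i → A i j = 0}
  add_mem' := fun {A B} hA hB i j hij => by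
    simp [Matrix.add_apply, hA hij, hB hij]
  mul_mem' := fun {A B} hA hB i j hij => by
    simp only [Matrix.mul_apply]
    refine Finset.sum_eq_zero fun k _ => ?_
    rcases lt_or_ge k i with h | h
    · rw [hA h, zero_mul]
    · rw [hB (lt_of_lt_of_le hij h), mul_zero]
  algebraMap_mem' := fun t i j hij => by
    simp [Matrix.algebraMap_matrix_apply, (ne_of_lt hij).symm]

/-- The set of strictly upper triangular matrices inside the triangular matrix algebra. -/
def strictlyUpper (T R : Type*) [CommRing T] [Ring R] [Algebra T R] (n : ℕ) :
    Set (triangularSubalgebra T R n) :=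
  {A | ∀ i j : Fin n, j ≤ i → (A : Matrix (Fin n) (Fin n) R) i j = 0}

/-- The entrywise action of an automorphism `α` of `R` on the triangular matrix algebra. -/
def entrywiseMap (T R : Type*) [CommRing T] [Ring R] [Algebra T R] (n : ℕ)
    (α : R ≃ₐ[T] R) (A : triangularSubalgebra T R n) : triangularSubalgebra T R n :=
  ⟨Matrix.of fun i j => α ((A : Matrix (Fin n) (Fin n) R) i j),
    fun i j hij => by simp [Matrix.of_apply, A.2 hij]⟩

namespace Stmt13Aux

open Matrix

variable {R : Type*} [CommRing R] {n : ℕ}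

lemma mem_tri (A : triangularSubalgebra R R n) {i j : Fin n} (h : j < i) :
    (A : Matrix (Fin n) (Fin n) R) i j = 0 := A.2 h

/-- matrix unit in the triangular algebra -/
def E (i j : Fin n) (h : i ≤ j) : triangularSubalgebra R R n :=
  ⟨Matrix.single i j 1, fun p q hpq => by
    rw [Matrix.single]
    simp only [Matrix.of_apply]
    rw [if_neg]
    rintro ⟨rfl, rfl⟩
    exact absurd h (not_le.2 hpq)⟩

def e (i : Fin n) : triangularSubalgebra R R n := E i i le_rfl

@[simp] lemma coe_E (i j : Fin n) (h : i ≤ j) :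
    ((E i j h : triangularSubalgebra R R n) : Matrix (Fin n) (Fin n) R)
      = Matrix.single i j 1 := rfl

@[simp] lemma coe_e (i : Fin n) :
    ((e i : triangularSubalgebra R R n) : Matrix (Fin n) (Fin n) R)
      = Matrix.single i i 1 := rfl

lemma sum_std : (∑ i : Fin n, Matrix.single i i (1:R)) = 1 := by
  ext a b
  rw [Matrix.sum_apply]
  rcases eq_or_ne a b with rfl | hab
  · rw [Finset.sum_eq_single a
      (fun i _ hi => by
        simp only [Matrix.single, Matrix.of_apply]
        rw [if_neg]; rintro ⟨rfl, -⟩; exact hi rfl) (by simp)]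
    simp [Matrix.single_apply_same]
  · rw [Matrix.one_apply_ne hab]
    refine Finset.sum_eq_zero fun i _ => ?_
    simp only [Matrix.single, Matrix.of_apply]
    rw [if_neg]; rintro ⟨rfl, rfl⟩; exact hab rfl

lemma sum_e : (∑ i, e i : triangularSubalgebra R R n) = 1 := by
  apply Subtype.ext
  push_cast
  simp only [coe_e]
  exact sum_std

/-- Key computation : `e i * A * e j` is `A i j` times the matrix unit. -/
lemma coe_eAe (A : triangularSubalgebra R R n) (i j : Fin n) :
    ((e i * A * e j : triangularSubalgebra R R n) : Matrix (Fin n) (Fin n) R)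
      = (A : Matrix (Fin n) (Fin n) R) i j • Matrix.single i j 1 := by
  push_cast
  simp only [coe_e]
  ext a b
  rcases eq_or_ne a i with rfl | ha
  · rcases eq_or_ne b j with rfl | hb
    · rw [Matrix.mul_single_apply_same, Matrix.single_mul_apply_same]
      simp [Matrix.smul_apply]
    · rw [Matrix.mul_single_apply_of_ne _ _ _ _ _ hb, Matrix.smul_apply,
        Matrix.single_apply_of_ne a j 1 a b (fun h => hb h.2.symm), smul_zero]
  · rw [Matrix.mul_apply]
    rw [Finset.sum_eq_zero fun k _ => by
      rw [Matrix.single_mul_apply_of_ne 1 i i a k ha (A : Matrix (Fin n) (Fin n) R),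
        zero_mul]]
    rw [Matrix.smul_apply, Matrix.single_apply_of_ne i j 1 a b (fun h => ha h.1.symm),
      smul_zero]

lemma eAe_of_lt (A : triangularSubalgebra R R n) {i j : Fin n} (h : j < i) :
    e i * A * e j = 0 := by
  apply Subtype.ext
  rw [coe_eAe, mem_tri A h, zero_smul]; rfl

lemma eAe_of_le (A : triangularSubalgebra R R n) {i j : Fin n} (h : i ≤ j) :
    e i * A * e j = (A : Matrix (Fin n) (Fin n) R) i j • E i j h := by
  apply Subtype.ext
  rw [coe_eAe]
  rfl

lemma eAe_same (A : triangularSubalgebra R R n) (i : Fin n) :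
    e i * A * e i = (A : Matrix (Fin n) (Fin n) R) i i • e i :=
  eAe_of_le A le_rfl

lemma decomp (A : triangularSubalgebra R R n) :
    A = ∑ i, ∑ j, e i * A * e j := by
  have h : (∑ i, e i) * A * (∑ j, e j) = ∑ i, ∑ j, e i * A * e j := by
    rw [Finset.sum_mul, Finset.sum_mul]
    exact Finset.sum_congr rfl fun i _ => Finset.mul_sum _ _ _
  rw [← h, sum_e, one_mul, mul_one]

lemma diag_mul (A B : triangularSubalgebra R R n) (j : Fin n) :
    ((A * B : triangularSubalgebra R R n) : Matrix (Fin n) (Fin n) R) j j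
      = (A : Matrix (Fin n) (Fin n) R) j j * (B : Matrix (Fin n) (Fin n) R) j j := by
  push_cast
  rw [Matrix.mul_apply]
  rw [Finset.sum_eq_single j (fun k _ hk => ?_) (by simp)]
  rcases lt_or_gt_of_ne hk with h | h
  · rw [mem_tri A h, zero_mul]
  · rw [mem_tri B h, mul_zero]

/-- strictly upper triangular matrices are nilpotent -/
lemma strict_pow (M : Matrix (Fin n) (Fin n) R) (hM : ∀ i j : Fin n, j ≤ i → M i j = 0) :
    ∀ k : ℕ, ∀ i j : Fin n, (j : ℕ) < (i : ℕ) + k → (M ^ k) i j = 0 := by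
  intro k
  induction k with
  | zero =>
    intro i j hij
    simp only [pow_zero]
    exact Matrix.one_apply_ne (by intro h; subst h; omega)
  | succ k IH =>
    intro i j hij
    rw [pow_succ', Matrix.mul_apply]
    refine Finset.sum_eq_zero fun l _ => ?_
    rcases le_or_gt l i with h | h
    · rw [hM i l h, zero_mul]
    · rw [IH l j (by omega), mul_zero]

/-- conjugation by a unit as an algebra automorphism -/
def conjE {A : Type*} [Ring A] [Algebra R A] (u : Aˣ) : A ≃ₐ[R] A where
  toFun x := ↑u * x * ↑u⁻¹
  invFun x := ↑u⁻¹ * x * ↑u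
  left_inv x := by
    simp only [mul_assoc, Units.inv_mul_cancel_left]
    rw [← mul_assoc, Units.inv_mul_cancel_right]
  right_inv x := by
    simp only [mul_assoc, Units.mul_inv_cancel_left]
    rw [← mul_assoc, Units.mul_inv_cancel_right]
  map_mul' x y := by
    simp only [mul_assoc, Units.inv_mul_cancel_left]
  map_add' x y := by noncomm_ring
  commutes' r := by
    show ↑u * algebraMap R A r * ↑u⁻¹ = algebraMap R A r
    rw [mul_assoc, Algebra.commutes r ((↑u⁻¹ : A)), Units.mul_inv_cancel_left]

@[simp] lemma conjE_apply {A : Type*} [Ring A] [Algebra R A] (u : Aˣ) (x : A) :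
    conjE (R := R) u x = ↑u * x * ↑u⁻¹ := rfl

lemma e_mul_e (i k : Fin n) :
    (e i * e k : triangularSubalgebra R R n) = if i = k then e i else 0 := by
  apply Subtype.ext
  push_cast
  simp only [coe_e]
  rcases eq_or_ne i k with rfl | h
  · rw [if_pos rfl, Matrix.single_mul_single_same, one_mul, coe_e]
  · rw [if_neg h, Matrix.single_mul_single_of_ne _ _ _ _ h]
    rfl

lemma diag_mem (v : Fin n → R) : Matrix.diagonal v ∈ triangularSubalgebra R R n :=
  fun p q hpq => Matrix.diagonal_apply_ne v (ne_of_gt hpq)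

lemma diag_mul_E (v w : Fin n → R) (i j : Fin n) :
    Matrix.diagonal v * Matrix.single i j 1 * Matrix.diagonal w
      = (v i * w j) • Matrix.single i j (1 : R) := by
  ext a b
  rw [Matrix.mul_diagonal, Matrix.diagonal_mul, Matrix.smul_apply]
  rcases eq_or_ne a i with rfl | ha
  · rcases eq_or_ne b j with rfl | hb
    · rw [Matrix.single_apply_same, smul_eq_mul, mul_one]; ring
    · rw [Matrix.single_apply_of_ne a j 1 a b (fun h => hb h.2.symm)]
      simp
  · rw [Matrix.single_apply_of_ne i j 1 a b (fun h => ha h.1.symm)]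
    simp

lemma diag_E_diag_entry (v w : Fin n → R) (i j : Fin n) :
    (Matrix.diagonal v * Matrix.single i j (1:R) * Matrix.diagonal w) i j = v i * w j := by
  rw [diag_mul_E, Matrix.smul_apply, Matrix.single_apply_same, smul_eq_mul, mul_one]

end Stmt13Aux

set_option maxHeartbeats 1600000
set_option synthInstance.maxHeartbeats 400000

open Stmt13Aux Matrix

/-- If `R` is a commutative ring, every `R`-algebra automorphism of the upper triangular
matrix algebra `T(n,R)` is inner. -/
theorem stmt13 (R : Type*) [CommRing R] (n : ℕ) (hn : 1 ≤ n)
    (φ : triangularSubalgebra R R n ≃ₐ[R] triangularSubalgebra R R n) :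
    ∃ u : (triangularSubalgebra R R n)ˣ,
      ∀ A : triangularSubalgebra R R n, φ A = ↑u * A * ↑u⁻¹ := by
  classical
  set f : Fin n → (triangularSubalgebra R R n) := fun i => φ (e i) with hf
  set ε : Fin n → Fin n → R := fun i j => (f i : Matrix (Fin n) (Fin n) R) j j with hε
  set d : Fin n → (triangularSubalgebra R R n) := fun i => ⟨Matrix.diagonal (ε i), diag_mem (ε i)⟩ with hd
  -- orthogonality of f
  have hfmul : ∀ i k, f i * f k = if i = k then f i else 0 := by
    intro i k
    rw [hf]
    simp only
    rw [← _root_.map_mul, e_mul_e]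
    rcases eq_or_ne i k with rfl | h
    · rw [if_pos rfl, if_pos rfl]
    · rw [if_neg h, if_neg h, _root_.map_zero]
  have hsumf : (∑ i, f i) = 1 := by
    rw [hf, ← map_sum, sum_e, _root_.map_one]
  -- entrywise orthogonality
  have hεo : ∀ i k j, ε i j * ε k j = if i = k then ε i j else 0 := by
    intro i k j
    have h := diag_mul (f i) (f k) j
    rw [hfmul] at h
    rcases eq_or_ne i k with rfl | hik
    · rw [if_pos rfl] at h ⊢; exact h.symm
    · rw [if_neg hik] at h ⊢
      rw [← h]; rfl
  have hcol : ∀ j, (∑ i, ε i j) = 1 := by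
    intro j
    have h := congrArg (fun X : (triangularSubalgebra R R n) => (X : Matrix (Fin n) (Fin n) R) j j) hsumf
    rw [AddSubmonoidClass.coe_finset_sum, Matrix.sum_apply,
      show ((1:(triangularSubalgebra R R n)) : Matrix (Fin n) (Fin n) R) = 1 from rfl, Matrix.one_apply_eq] at h
    exact h
  have hdcoe : ∀ i, (d i : Matrix (Fin n) (Fin n) R) = Matrix.diagonal (ε i) := fun i => rfl
  have hdmul : ∀ i k, d i * d k = if i = k then d i else 0 := by
    intro i k
    apply Subtype.ext
    rw [MulMemClass.coe_mul, hdcoe, hdcoe, Matrix.diagonal_mul_diagonal]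
    rcases eq_or_ne i k with rfl | hik
    · rw [if_pos rfl, hdcoe]
      have h : (fun j => ε i j * ε i j) = ε i := by
        funext j
        have h2 := hεo i i j
        rwa [if_pos rfl] at h2
      exact congrArg Matrix.diagonal h
    · rw [if_neg hik, ZeroMemClass.coe_zero]
      have h : (fun j => ε i j * ε k j) = (fun _ => (0:R)) := by
        funext j
        have h2 := hεo i k j
        rwa [if_neg hik] at h2
      rw [show (Matrix.diagonal fun j => ε i j * ε k j) = Matrix.diagonal (fun _ => (0:R)) from
        congrArg Matrix.diagonal h, Matrix.diagonal_zero]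
  -- the first conjugating unit
  set u1 : (triangularSubalgebra R R n) := ∑ i, f i * d i with hu1
  have hu1diag : ∀ j, (u1 : Matrix (Fin n) (Fin n) R) j j = 1 := by
    intro j
    rw [hu1]
    rw [AddSubmonoidClass.coe_finset_sum, Matrix.sum_apply]
    have : ∀ i, ((f i * d i : (triangularSubalgebra R R n)) : Matrix (Fin n) (Fin n) R) j j = ε i j := by
      intro i
      rw [diag_mul, hdcoe, Matrix.diagonal_apply_eq]
      have := hεo i i j
      rwa [if_pos rfl] at this
    rw [Finset.sum_congr rfl fun i _ => this i, hcol]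
  set N : (triangularSubalgebra R R n) := u1 - 1 with hN
  have hNstrict : ∀ p q : Fin n, q ≤ p → (N : Matrix (Fin n) (Fin n) R) p q = 0 := by
    intro p q hqp
    rw [hN]
    push_cast
    rcases eq_or_ne p q with rfl | hpq
    · rw [Matrix.sub_apply, hu1diag, Matrix.one_apply_eq, sub_self]
    · rw [Matrix.sub_apply, mem_tri u1 (lt_of_le_of_ne hqp (fun h => hpq h.symm)),
        Matrix.one_apply_ne hpq, sub_zero]
  have hNnil : IsNilpotent N := by
    refine ⟨n, ?_⟩
    apply Subtype.ext
    rw [SubmonoidClass.coe_pow, ZeroMemClass.coe_zero]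
    ext p q
    rw [strict_pow (N : Matrix (Fin n) (Fin n) R) hNstrict n p q (by omega)]
    simp
  have hu1unit : IsUnit (1 + N) := hNnil.isUnit_one_add
  set U1 : (triangularSubalgebra R R n)ˣ := hu1unit.unit with hU1
  have hU1coe : (U1 : (triangularSubalgebra R R n)) = u1 := by
    rw [hU1, IsUnit.unit_spec, hN]; abel
  have hU1d : ∀ i, (U1 : (triangularSubalgebra R R n)) * d i = f i * (U1 : (triangularSubalgebra R R n)) := by
    intro i
    rw [hU1coe, hu1, Finset.sum_mul, Finset.mul_sum]
    have h1 : ∀ k ∈ Finset.univ, k ≠ i → f k * d k * d i = 0 := by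
      intro k _ hk
      rw [mul_assoc, hdmul, if_neg hk, mul_zero]
    have h2 : ∀ k ∈ Finset.univ, k ≠ i → f i * (f k * d k) = 0 := by
      intro k _ hk
      rw [← mul_assoc, hfmul, if_neg (fun h => hk h.symm), zero_mul]
    rw [Finset.sum_eq_single i h1 (fun h => absurd (Finset.mem_univ i) h),
      Finset.sum_eq_single i h2 (fun h => absurd (Finset.mem_univ i) h),
      mul_assoc, hdmul, if_pos rfl, ← mul_assoc, hfmul, if_pos rfl]
  set ψ : (triangularSubalgebra R R n) ≃ₐ[R] (triangularSubalgebra R R n) := φ.trans (conjE U1⁻¹) with hψ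
  have hψapp : ∀ A : (triangularSubalgebra R R n), ψ A = ↑U1⁻¹ * φ A * ↑U1 := by
    intro A
    rw [hψ, AlgEquiv.trans_apply, conjE_apply, inv_inv]
  have hψe : ∀ i, ψ (e i) = d i := by
    intro i
    rw [hψapp]
    rw [show φ (e i) = f i from rfl, mul_assoc, ← hU1d i, Units.inv_mul_cancel_left]
  -- Stage 2: the diagonal idempotents are the standard ones
  have P2lt : ∀ (i p q : Fin n), p < q → ε i p * ε i q = 0 := by
    intro i p q hpq
    set B : (triangularSubalgebra R R n) := ψ.symm (E p q hpq.le) with hB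
    have hψB : ψ B = E p q hpq.le := ψ.apply_symm_apply _
    have key : d i * E p q hpq.le * d i = (B : Matrix (Fin n) (Fin n) R) i i • d i := by
      calc d i * E p q hpq.le * d i = ψ (e i) * ψ B * ψ (e i) := by rw [hψe, hψB]
        _ = ψ (e i * B * e i) := by rw [_root_.map_mul, _root_.map_mul]
        _ = ψ ((B : Matrix (Fin n) (Fin n) R) i i • e i) := by rw [eAe_same]
        _ = (B : Matrix (Fin n) (Fin n) R) i i • ψ (e i) := by rw [_root_.map_smul]
        _ = _ := by rw [hψe]
    have h2 := congrArg (fun X : (triangularSubalgebra R R n) => (X : Matrix (Fin n) (Fin n) R) p q) key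
    rw [MulMemClass.coe_mul, MulMemClass.coe_mul, hdcoe, coe_E, diag_E_diag_entry,
      SetLike.val_smul, Matrix.smul_apply, hdcoe,
      Matrix.diagonal_apply_ne _ (ne_of_lt hpq), smul_zero] at h2
    exact h2
  have P2 : ∀ (i p q : Fin n), p ≠ q → ε i p * ε i q = 0 := by
    intro i p q h
    rcases lt_or_gt_of_ne h with h' | h'
    · exact P2lt i p q h'
    · rw [mul_comm]; exact P2lt i q p h'
  have P3 : ∀ (i i' p q : Fin n), i' < i → p ≤ q → ε i p * ε i' q = 0 := by
    intro i i' p q hii hpq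
    set B : (triangularSubalgebra R R n) := ψ.symm (E p q hpq) with hB
    have hψB : ψ B = E p q hpq := ψ.apply_symm_apply _
    have key : d i * E p q hpq * d i' = 0 := by
      calc d i * E p q hpq * d i' = ψ (e i * B * e i') := by
            rw [_root_.map_mul, _root_.map_mul, hψe, hψB, hψe]
        _ = ψ 0 := by rw [eAe_of_lt B hii]
        _ = 0 := _root_.map_zero ψ
    have h2 := congrArg (fun X : (triangularSubalgebra R R n) => (X : Matrix (Fin n) (Fin n) R) p q) key
    rw [MulMemClass.coe_mul, MulMemClass.coe_mul, hdcoe, hdcoe, coe_E, diag_E_diag_entry,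
      ZeroMemClass.coe_zero, Matrix.zero_apply] at h2
    exact h2
  have P4 : ∀ (i : Fin n) (r : R), (∀ q, r * ε i q = 0) → r = 0 := by
    intro i r hr
    have hrd : r • d i = 0 := by
      apply Subtype.ext
      rw [SetLike.val_smul, hdcoe, ZeroMemClass.coe_zero, ← Matrix.diagonal_smul,
        show (r • ε i) = (fun _ => (0:R)) from funext fun q => hr q, Matrix.diagonal_zero]
    have hz : ψ (r • e i) = 0 := by rw [_root_.map_smul, hψe, hrd]
    have h0 : r • e i = (0:(triangularSubalgebra R R n)) := by
      apply ψ.injective; rw [hz, _root_.map_zero]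
    have h3 := congrArg (fun X : (triangularSubalgebra R R n) => (X : Matrix (Fin n) (Fin n) R) i i) h0
    rw [SetLike.val_smul, Matrix.smul_apply, coe_e, Matrix.single_apply_same,
      smul_eq_mul, mul_one, ZeroMemClass.coe_zero, Matrix.zero_apply] at h3
    exact h3
  have H : ∀ m : ℕ, ∀ j : Fin n, (j:ℕ) < m → ∀ i, i ≠ j → ε i j = 0 := by
    intro m
    induction m with
    | zero => intro j hj; omega
    | succ m IH =>
      intro j hj i hij
      rcases lt_or_gt_of_ne hij with h | h
      · have h1 : ε i i = 1 := by
          have hc := hcol i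
          rw [Finset.sum_eq_single i (fun k _ hk => IH i (by have := (Fin.lt_def.mp h); omega) k hk)
            (fun hni => absurd (Finset.mem_univ i) hni)] at hc
          exact hc
        have h2 := P2 i i j hij
        rwa [h1, one_mul] at h2
      · refine P4 j (ε i j) ?_
        intro q
        rcases le_or_gt j q with hq | hq
        · exact P3 i j j q h hq
        · rw [IH q (by have := (Fin.lt_def.mp hq); omega) j (ne_of_gt hq), mul_zero]
  have hmain : ∀ j i : Fin n, i ≠ j → ε i j = 0 :=
    fun j i hij => H ((j:ℕ)+1) j (Nat.lt_succ_self _) i hij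
  have hεdiag : ∀ j, ε j j = 1 := by
    intro j
    have hc := hcol j
    rw [Finset.sum_eq_single j (fun k _ hk => hmain j k hk)
      (fun hnj => absurd (Finset.mem_univ j) hnj)] at hc
    exact hc
  have hde : ∀ i, d i = e i := by
    intro i
    apply Subtype.ext
    rw [hdcoe, coe_e]
    ext a b
    rcases eq_or_ne a b with rfl | hab
    · rw [Matrix.diagonal_apply_eq]
      rcases eq_or_ne i a with rfl | hia
      · rw [hεdiag, Matrix.single_apply_same]
      · rw [hmain a i hia, Matrix.single_apply_of_ne i i 1 a a (fun hh => hia hh.1)]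
    · rw [Matrix.diagonal_apply_ne _ hab,
        Matrix.single_apply_of_ne i i 1 a b (fun hh => hab (hh.1.symm.trans hh.2))]
  have hψe' : ∀ i, ψ (e i) = e i := fun i => (hψe i).trans (hde i)
  -- Stage 3: coefficients on matrix units
  have hEdec : ∀ (p q : Fin n) (h : p ≤ q), (E p q h : (triangularSubalgebra R R n)) = e p * E p q h * e q := by
    intro p q h
    rw [eAe_of_le _ h, coe_E, Matrix.single_apply_same, one_smul]
  have hψE : ∀ (p q : Fin n) (h : p ≤ q),
      ψ (E p q h) = ((ψ (E p q h) : Matrix (Fin n) (Fin n) R) p q) • E p q h := by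
    intro p q h
    conv_lhs => rw [hEdec p q h]
    rw [_root_.map_mul, _root_.map_mul, hψe', hψe', eAe_of_le _ h]
  set c : Fin n → Fin n → R := fun p q =>
    if h : p ≤ q then ((ψ (E p q h) : Matrix (Fin n) (Fin n) R) p q) else 0 with hcdef
  have hcval : ∀ (p q : Fin n) (h : p ≤ q),
      c p q = ((ψ (E p q h) : Matrix (Fin n) (Fin n) R) p q) := by
    intro p q h
    rw [hcdef]
    exact dif_pos h
  have hψE' : ∀ (p q : Fin n) (h : p ≤ q), ψ (E p q h) = c p q • E p q h := by
    intro p q h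
    rw [hcval p q h]
    exact hψE p q h
  have hsmulE : ∀ (s : R) (p q : Fin n) (h : p ≤ q),
      ((s • E p q h : (triangularSubalgebra R R n)) : Matrix (Fin n) (Fin n) R) p q = s := by
    intro s p q h
    rw [SetLike.val_smul, Matrix.smul_apply, coe_E, Matrix.single_apply_same,
      smul_eq_mul, mul_one]
  have hcunit : ∀ (p q : Fin n) (h : p ≤ q), IsUnit (c p q) := by
    intro p q h
    obtain ⟨X, hX⟩ := ψ.surjective (E p q h)
    have h2 : ψ (e p * X * e q) = E p q h := by
      rw [_root_.map_mul, _root_.map_mul, hψe', hψe', hX, ← hEdec p q h]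
    rw [eAe_of_le X h, _root_.map_smul, hψE' p q h, smul_smul] at h2
    have h3 := congrArg (fun Y : (triangularSubalgebra R R n) => (Y : Matrix (Fin n) (Fin n) R) p q) h2
    rw [hsmulE, coe_E, Matrix.single_apply_same] at h3
    exact IsUnit.of_mul_eq_one _ ((mul_comm _ _).trans h3)
  have hcoc : ∀ (p q r : Fin n) (h1 : p ≤ q) (h2 : q ≤ r), c p q * c q r = c p r := by
    intro p q r h1 h2
    have hE : (E p q h1 * E q r h2 : triangularSubalgebra R R n) = E p r (h1.trans h2) := by
      apply Subtype.ext
      rw [MulMemClass.coe_mul, coe_E, coe_E, coe_E, Matrix.single_mul_single_same, one_mul]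
    have h5 := congrArg ψ hE
    rw [_root_.map_mul, hψE' p q h1, hψE' q r h2, hψE' p r (h1.trans h2),
      smul_mul_assoc, mul_smul_comm, smul_smul, hE] at h5
    have h4 := congrArg (fun Y : (triangularSubalgebra R R n) => (Y : Matrix (Fin n) (Fin n) R) p r) h5
    rw [hsmulE, hsmulE] at h4
    exact h4
  -- the diagonal unit
  have hzle : ∀ i : Fin n, (⟨0, hn⟩ : Fin n) ≤ i := fun i => by simp [Fin.le_def]
  set t : Fin n → Rˣ := fun i => (hcunit ⟨0, hn⟩ i (hzle i)).unit with ht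
  have htval : ∀ i, ((t i : Rˣ) : R) = c ⟨0, hn⟩ i := fun i => IsUnit.unit_spec _
  have hct : ∀ (i j : Fin n), i ≤ j → (((t i)⁻¹ : Rˣ) : R) * ((t j : Rˣ) : R) = c i j := by
    intro i j h
    have h5 := hcoc ⟨0, hn⟩ i j (hzle i) h
    calc (((t i)⁻¹ : Rˣ) : R) * ((t j : Rˣ) : R)
        = (((t i)⁻¹ : Rˣ) : R) * (c ⟨0, hn⟩ i * c i j) := by rw [htval, h5]
      _ = ((((t i)⁻¹ : Rˣ) : R) * ((t i : Rˣ) : R)) * c i j := by rw [htval]; ring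
      _ = c i j := by rw [Units.inv_mul, one_mul]
  have hU2a : ∀ (v w : Fin n → R) (hv : Matrix.diagonal v ∈ (triangularSubalgebra R R n)) (hw : Matrix.diagonal w ∈ (triangularSubalgebra R R n)),
      (∀ i, v i * w i = 1) →
      (⟨Matrix.diagonal v, hv⟩ : (triangularSubalgebra R R n)) * ⟨Matrix.diagonal w, hw⟩ = 1 := by
    intro v w hv hw hvw
    apply Subtype.ext
    rw [MulMemClass.coe_mul, OneMemClass.coe_one]
    show Matrix.diagonal v * Matrix.diagonal w = _
    rw [Matrix.diagonal_mul_diagonal,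
      show Matrix.diagonal (fun i => v i * w i) = Matrix.diagonal (fun _ => (1:R)) from
        congrArg Matrix.diagonal (funext fun i => hvw i), Matrix.diagonal_one]
  set U2 : (triangularSubalgebra R R n)ˣ := ⟨⟨Matrix.diagonal fun i => (((t i)⁻¹ : Rˣ) : R), diag_mem _⟩,
      ⟨Matrix.diagonal fun i => ((t i : Rˣ) : R), diag_mem _⟩,
      hU2a _ _ _ _ (fun i => Units.inv_mul _), hU2a _ _ _ _ (fun i => Units.mul_inv _)⟩ with hU2
  have hU2conj : ∀ (p q : Fin n) (h : p ≤ q), ((U2 : (triangularSubalgebra R R n)ˣ) : (triangularSubalgebra R R n)) * E p q h * ((U2⁻¹ : (triangularSubalgebra R R n)ˣ) : (triangularSubalgebra R R n)) = c p q • E p q h := by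
    intro p q h
    apply Subtype.ext
    show Matrix.diagonal (fun i => (((t i)⁻¹ : Rˣ) : R)) * Matrix.single p q 1 *
        Matrix.diagonal (fun i => ((t i : Rˣ) : R)) = _
    rw [diag_mul_E, hct p q h, SetLike.val_smul, coe_E]
  have hψconj : ∀ A : (triangularSubalgebra R R n), ψ A = ((U2 : (triangularSubalgebra R R n)ˣ) : (triangularSubalgebra R R n)) * A * ((U2⁻¹ : (triangularSubalgebra R R n)ˣ) : (triangularSubalgebra R R n)) := by
    intro A
    have hA := decomp A
    have lhs : ψ A = ∑ i, ∑ j, ψ (e i * A * e j) := by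
      conv_lhs => rw [hA]
      rw [_root_.map_sum]
      exact Finset.sum_congr rfl fun i _ => _root_.map_sum ψ _ _
    have rhs : ((U2 : (triangularSubalgebra R R n)ˣ) : (triangularSubalgebra R R n)) * A * ((U2⁻¹ : (triangularSubalgebra R R n)ˣ) : (triangularSubalgebra R R n))
        = ∑ i, ∑ j, ((U2 : (triangularSubalgebra R R n)ˣ) : (triangularSubalgebra R R n)) * (e i * A * e j) * ((U2⁻¹ : (triangularSubalgebra R R n)ˣ) : (triangularSubalgebra R R n)) := by
      conv_lhs => rw [hA]
      simp only [Finset.mul_sum, Finset.sum_mul]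
    rw [lhs, rhs]
    refine Finset.sum_congr rfl fun i _ => Finset.sum_congr rfl fun j _ => ?_
    rcases le_or_gt i j with h | h
    · rw [eAe_of_le A h, _root_.map_smul, hψE' i j h, mul_smul_comm, smul_mul_assoc,
        hU2conj i j h]
    · rw [eAe_of_lt A h, _root_.map_zero, mul_zero, zero_mul]
  -- conclusion
  refine ⟨U1 * U2, fun A => ?_⟩
  have hφA : φ A = ((U1 : (triangularSubalgebra R R n)ˣ) : (triangularSubalgebra R R n)) * ψ A * ((U1⁻¹ : (triangularSubalgebra R R n)ˣ) : (triangularSubalgebra R R n)) := by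
    rw [hψapp A]
    simp only [mul_assoc, Units.mul_inv, mul_one, Units.mul_inv_cancel_left]
  rw [hφA, hψconj A, _root_.mul_inv_rev, Units.val_mul, Units.val_mul]
  simp only [mul_assoc]
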